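/- Let f(m) denote the number of maximum (size 2m) nonattacking pawn arrangements on a 2×2m board. Then f satisfies the recurrence f(m) = f(m−1) + 2m + 1 for m ≥ 2, with f(1) = 4; hence f(m) = (m+1)². -/
import Mathlib


/-- Two cells are diagonally adjacent (a pawn attack) if their rows and
columns each differ by exactly 1. -/
def PawnAdj {a b : ℕ} (p q : Fin a × Fin b) : Prop :=
  |((p.1 : ℕ) : ℤ) - ((q.1 : ℕ) : ℤ)| = 1 ∧ |((p.2 : ℕ) : ℤ) - ((q.2 : ℕ) : ℤ)| = 1

instance {a b : ℕ} (p q : Fin a × Fin b) : Decidable (PawnAdj p q) := by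
  unfold PawnAdj; infer_instance

/-- A set of pawns is nonattacking if no two distinct cells are diagonally adjacent. -/
def Nonatt {a b : ℕ} (S : Finset (Fin a × Fin b)) : Prop :=
  ∀ p ∈ S, ∀ q ∈ S, p ≠ q → ¬ PawnAdj p q

instance {a b : ℕ} (S : Finset (Fin a × Fin b)) : Decidable (Nonatt S) := by
  unfold Nonatt; infer_instance

/-- `f m` is the number of maximum (size `2m`) nonattacking pawn arrangements
on a `2 × 2m` board. -/
def pawnCount (m : ℕ) : ℕ :=
  ((Finset.univ : Finset (Fin 2 × Fin (2 * m))).powerset.filter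
      (fun S => S.card = 2 * m ∧ Nonatt S)).card

open Finset

lemma pawnAdj_iff {a b : ℕ} (p q : Fin a × Fin b) :
    PawnAdj p q ↔ (((p.1:ℕ) = (q.1:ℕ)+1 ∨ (q.1:ℕ) = (p.1:ℕ)+1) ∧
      ((p.2:ℕ) = (q.2:ℕ)+1 ∨ (q.2:ℕ) = (p.2:ℕ)+1)) := by
  unfold PawnAdj
  rw [abs_eq (by norm_num : (0:ℤ) ≤ 1), abs_eq (by norm_num : (0:ℤ) ≤ 1)]
  omega

def pcond (k l : ℕ) {m : ℕ} (p : Fin 2 × Fin (2*m)) : Prop :=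
  ((p.2:ℕ)/2 < (if (p.1:ℕ) = (p.2:ℕ) % 2 then k else l)) ↔ ((p.2:ℕ) % 2 = 0)

instance (k l : ℕ) {m : ℕ} : DecidablePred (pcond k l (m := m)) := fun p => by
  unfold pcond; infer_instance

def Fkl (m k l : ℕ) : Finset (Fin 2 × Fin (2*m)) := univ.filter (pcond k l)

def blk {m : ℕ} (p : Fin 2 × Fin (2*m)) : Fin 2 × Fin m :=
  ((if (p.1:ℕ) = (p.2:ℕ)%2 then 0 else 1), ⟨(p.2:ℕ)/2, by have := p.2.isLt; omega⟩)

def Lc {m : ℕ} (b : Fin 2 × Fin m) : Fin 2 × Fin (2*m) :=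
  (b.1, ⟨2*(b.2:ℕ), by have := b.2.isLt; omega⟩)

def Rc {m : ℕ} (b : Fin 2 × Fin m) : Fin 2 × Fin (2*m) :=
  (⟨1-(b.1:ℕ), by omega⟩, ⟨2*(b.2:ℕ)+1, by have := b.2.isLt; omega⟩)

lemma mem_blk {m : ℕ} (p : Fin 2 × Fin (2*m)) (b : Fin 2 × Fin m) (h : blk p = b) :
    p = Lc b ∨ p = Rc b := by
  obtain ⟨r, c⟩ := p
  obtain ⟨e, t⟩ := b
  unfold blk at h
  rw [Prod.ext_iff] at h
  obtain ⟨h1, h2⟩ := h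
  have h2' : (c:ℕ)/2 = (t:ℕ) := congrArg Fin.val h2
  have hr := r.isLt
  have hc := c.isLt
  unfold Lc Rc
  by_cases hif : (r:ℕ) = (c:ℕ) % 2
  · rw [if_pos hif] at h1
    have h1' : (0:ℕ) = (e:ℕ) := congrArg Fin.val h1
    rcases Nat.even_or_odd (c:ℕ) with he | ho
    · left
      have : (c:ℕ) % 2 = 0 := Nat.even_iff.mp he
      refine Prod.ext (Fin.ext ?_) (Fin.ext ?_) <;> simp <;> omega
    · right
      have : (c:ℕ) % 2 = 1 := Nat.odd_iff.mp ho
      refine Prod.ext (Fin.ext ?_) (Fin.ext ?_) <;> simp <;> omega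
  · rw [if_neg hif] at h1
    have h1' : (1:ℕ) = (e:ℕ) := congrArg Fin.val h1
    rcases Nat.even_or_odd (c:ℕ) with he | ho
    · left
      have : (c:ℕ) % 2 = 0 := Nat.even_iff.mp he
      refine Prod.ext (Fin.ext ?_) (Fin.ext ?_) <;> simp <;> omega
    · right
      have : (c:ℕ) % 2 = 1 := Nat.odd_iff.mp ho
      refine Prod.ext (Fin.ext ?_) (Fin.ext ?_) <;> simp <;> omega

lemma blk_L {m : ℕ} (b : Fin 2 × Fin m) : blk (Lc b) = b := by
  obtain ⟨e, t⟩ := b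
  have he := e.isLt
  unfold blk Lc
  refine Prod.ext ?_ (Fin.ext ?_)
  · simp only
    by_cases h : (e:ℕ) = (2*(t:ℕ))%2
    · rw [if_pos h]; exact Fin.ext (by simp only [Fin.val_zero, Fin.val_one]; omega)
    · rw [if_neg h]; exact Fin.ext (by simp only [Fin.val_zero, Fin.val_one]; omega)
  · simp

lemma blk_R {m : ℕ} (b : Fin 2 × Fin m) : blk (Rc b) = b := by
  obtain ⟨e, t⟩ := b
  have he := e.isLt
  unfold blk Rc
  refine Prod.ext ?_ (Fin.ext ?_)
  · simp only
    by_cases h : (1-(e:ℕ)) = (2*(t:ℕ)+1)%2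
    · rw [if_pos h]; exact Fin.ext (by simp only [Fin.val_zero, Fin.val_one]; omega)
    · rw [if_neg h]; exact Fin.ext (by simp only [Fin.val_zero, Fin.val_one]; omega)
  · simp
    omega

lemma Lc_ne_Rc {m : ℕ} (b : Fin 2 × Fin m) : Lc b ≠ Rc b := by
  intro h
  have := congrArg (fun p => ((p : Fin 2 × Fin (2*m)).2 : ℕ)) h
  simp [Lc, Rc] at this

lemma adj_LR {m : ℕ} (b : Fin 2 × Fin m) : PawnAdj (Lc b) (Rc b) := by
  obtain ⟨e, t⟩ := b
  have := e.isLt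
  rw [pawnAdj_iff]
  constructor <;> simp [Lc, Rc] <;> omega

lemma L_mem_F {m : ℕ} (k l : ℕ) (b : Fin 2 × Fin m) :
    Lc b ∈ Fkl m k l ↔ (b.2:ℕ) < (if (b.1:ℕ) = 0 then k else l) := by
  obtain ⟨e, t⟩ := b
  have he := e.isLt
  simp only [Fkl, mem_filter, mem_univ, true_and]
  unfold pcond Lc
  simp only
  have h1 : (2*(t:ℕ))/2 = (t:ℕ) := by omega
  have h2 : (2*(t:ℕ)) % 2 = 0 := by omega
  rw [h1, h2]
  by_cases h : (e:ℕ) = 0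
  · rw [if_pos h]; simp
  · rw [if_neg h]; simp

lemma R_mem_F {m : ℕ} (k l : ℕ) (b : Fin 2 × Fin m) :
    Rc b ∈ Fkl m k l ↔ ¬ ((b.2:ℕ) < (if (b.1:ℕ) = 0 then k else l)) := by
  obtain ⟨e, t⟩ := b
  have he := e.isLt
  simp only [Fkl, mem_filter, mem_univ, true_and]
  unfold pcond Rc
  simp only
  have h1 : (2*(t:ℕ)+1)/2 = (t:ℕ) := by omega
  have h2 : (2*(t:ℕ)+1) % 2 = 1 := by omega
  rw [h1, h2]
  by_cases h : (e:ℕ) = 0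
  · simp [h]
  · have he1 : (e:ℕ) = 1 := by omega
    simp [he1]

lemma Fkl_card (m k l : ℕ) : (Fkl m k l).card = 2*m := by
  refine Eq.trans (b := (univ : Finset (Fin 2 × Fin m)).card) ?_
    (by rw [Finset.card_univ, Fintype.card_prod, Fintype.card_fin, Fintype.card_fin])
  apply Finset.card_bij' (i := fun p _ => blk p)
    (j := fun b _ => if (b.2:ℕ) < (if (b.1:ℕ) = 0 then k else l) then Lc b else Rc b)
  · intro p _; exact mem_univ _
  · intro b _
    by_cases h : (b.2:ℕ) < (if (b.1:ℕ) = 0 then k else l)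
    · rw [if_pos h]; exact (L_mem_F k l b).mpr h
    · rw [if_neg h]; exact (R_mem_F k l b).mpr h
  · intro p hp
    by_cases h : (blk p).2.val < (if ((blk p).1 : ℕ) = 0 then k else l)
    · rw [if_pos h]
      rcases mem_blk p (blk p) rfl with h' | h'
      · exact h'.symm
      · exfalso
        rw [h'] at hp
        exact (R_mem_F k l (blk p)).mp hp h
    · rw [if_neg h]
      rcases mem_blk p (blk p) rfl with h' | h'
      · exfalso
        rw [h'] at hp
        exact h ((L_mem_F k l (blk p)).mp hp)
      · exact h'.symm
  · intro b _
    by_cases h : (b.2:ℕ) < (if (b.1:ℕ) = 0 then k else l)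
    · rw [if_pos h, blk_L]
    · rw [if_neg h, blk_R]

lemma nonatt_F (m k l : ℕ) : Nonatt (Fkl m k l) := by
  intro p hp q hq _ hadj
  rw [pawnAdj_iff] at hadj
  simp only [Fkl, mem_filter, mem_univ, true_and] at hp hq
  unfold pcond at hp hq
  have h1 := p.1.isLt
  have h2 := q.1.isLt
  by_cases hip : (p.1:ℕ) = (p.2:ℕ) % 2 <;> by_cases hiq : (q.1:ℕ) = (q.2:ℕ) % 2 <;>
    [rw [if_pos hip] at hp; rw [if_pos hip] at hp; rw [if_neg hip] at hp;
     rw [if_neg hip] at hp] <;>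
    [rw [if_pos hiq] at hq; rw [if_neg hiq] at hq; rw [if_pos hiq] at hq;
     rw [if_neg hiq] at hq] <;>
    omega

lemma initseg {m : ℕ} (A : Finset (Fin m))
    (h : ∀ t : Fin m, ∀ ht : (t:ℕ)+1 < m, (⟨(t:ℕ)+1, ht⟩ : Fin m) ∈ A → t ∈ A) :
    A.card ≤ m ∧ ∀ t : Fin m, (t ∈ A ↔ (t:ℕ) < A.card) := by
  have hdown : ∀ (d : ℕ) (t : Fin m), t ∈ A → ∀ s : Fin m, (s:ℕ) + d = (t:ℕ) → s ∈ A := by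
    intro d
    induction d with
    | zero =>
      intro t ht s hs
      have : s = t := Fin.ext (by omega)
      rwa [this]
    | succ n ih =>
      intro t ht s hs
      have hlt : (s:ℕ)+1 < m := by have := t.isLt; omega
      exact h s hlt (ih t ht ⟨(s:ℕ)+1, hlt⟩ (by simp; omega))
  have hcard : A.card ≤ m := by
    have := Finset.card_le_card (Finset.subset_univ A)
    simpa using this
  refine ⟨hcard, fun t => ?_⟩
  constructor
  · intro ht
    have hsub : Finset.Iic t ⊆ A := by
      intro s hs
      rw [Finset.mem_Iic] at hs
      exact hdown ((t:ℕ) - (s:ℕ)) t ht s (by have := (Fin.le_def.mp hs); omega)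
    have := Finset.card_le_card hsub
    rw [Fin.card_Iic] at this
    omega
  · intro hlt
    by_contra ht
    have hsub : A ⊆ Finset.Iio t := by
      intro s hs
      rw [Finset.mem_Iio]
      by_contra hst
      push_neg at hst
      exact ht (hdown ((s:ℕ) - (t:ℕ)) s hs t (by have := (Fin.le_def.mp hst); omega))
    have := Finset.card_le_card hsub
    rw [Fin.card_Iio] at this
    omega

lemma card_filter_lt (m k : ℕ) (hk : k ≤ m) :
    ((univ : Finset (Fin m)).filter (fun (t : Fin m) => (t:ℕ) < k)).card = k := by
  have heq : (univ : Finset (Fin m)).filter (fun (t : Fin m) => (t:ℕ) < k)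
      = Finset.attachFin (range k) (fun x hx => by rw [Finset.mem_range] at hx; omega) := by
    ext x
    simp [Finset.mem_attachFin, Finset.mem_range]
  rw [heq, Finset.card_attachFin, Finset.card_range]

lemma adj_symm {a b : ℕ} {p q : Fin a × Fin b} (h : PawnAdj p q) : PawnAdj q p := by
  rw [pawnAdj_iff] at h ⊢; omega

lemma exists_F {m : ℕ} (S : Finset (Fin 2 × Fin (2*m))) (hcard : S.card = 2*m)
    (hna : Nonatt S) : ∃ k ≤ m, ∃ l ≤ m, S = Fkl m k l := by
  have hfible : ∀ b : Fin 2 × Fin m, (S.filter (fun p => blk p = b)).card ≤ 1 := by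
    intro b
    apply Finset.card_le_one.mpr
    intro p hp q hq
    rw [mem_filter] at hp hq
    by_contra hne
    have hb := hp.2.trans hq.2.symm
    rcases mem_blk p b hp.2 with h1 | h1 <;> rcases mem_blk q b hq.2 with h2 | h2
    · exact hne (h1.trans h2.symm)
    · exact hna p hp.1 q hq.1 hne (h1 ▸ h2 ▸ adj_LR b)
    · exact hna p hp.1 q hq.1 hne (h1 ▸ h2 ▸ adj_symm (adj_LR b))
    · exact hne (h1.trans h2.symm)
  have hsum := Finset.card_eq_sum_card_fiberwise
    (f := blk) (s := S) (t := (univ : Finset (Fin 2 × Fin m))) (fun p _ => mem_univ _)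
  have huniv : (univ : Finset (Fin 2 × Fin m)).card = 2*m := by
    rw [Finset.card_univ, Fintype.card_prod, Fintype.card_fin, Fintype.card_fin]
  have hfib : ∀ b : Fin 2 × Fin m, (S.filter (fun p => blk p = b)).card = 1 := by
    by_contra hcon
    push_neg at hcon
    obtain ⟨b, hb⟩ := hcon
    have h0 : (S.filter (fun p => blk p = b)).card < 1 := lt_of_le_of_ne (hfible b) hb
    have hlt : ∑ x ∈ (univ : Finset (Fin 2 × Fin m)), (S.filter (fun p => blk p = x)).card
        < ∑ _x ∈ (univ : Finset (Fin 2 × Fin m)), 1 :=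
      Finset.sum_lt_sum (fun i _ => hfible i) ⟨b, mem_univ b, h0⟩
    rw [Finset.sum_const, smul_eq_mul, mul_one, huniv] at hlt
    omega
  have hLR : ∀ b : Fin 2 × Fin m, (Lc b ∈ S ↔ ¬ Rc b ∈ S) := by
    intro b
    obtain ⟨a, ha⟩ := Finset.card_eq_one.mp (hfib b)
    have hmem : ∀ p, p ∈ S ∧ blk p = b ↔ p = a := by
      intro p
      have h2 : p ∈ S.filter (fun q => blk q = b) ↔ p = a := by
        rw [ha, Finset.mem_singleton]
      rw [mem_filter] at h2
      exact h2
    have haS : a ∈ S ∧ blk a = b := (hmem a).mpr rfl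
    rcases mem_blk a b haS.2 with h | h
    · have hL : Lc b ∈ S := h ▸ haS.1
      have hR : ¬ Rc b ∈ S := by
        intro hR
        exact Lc_ne_Rc b (((hmem _).mp ⟨hR, blk_R b⟩).trans h).symm
      simp [hL, hR]
    · have hR : Rc b ∈ S := h ▸ haS.1
      have hL : ¬ Lc b ∈ S := by
        intro hL
        exact Lc_ne_Rc b (((hmem _).mp ⟨hL, blk_L b⟩).trans h)
      simp [hL, hR]
  have hmono : ∀ e : Fin 2, ∀ t : Fin m, ∀ ht : (t:ℕ)+1 < m,
      Lc (e, ⟨(t:ℕ)+1, ht⟩) ∈ S → Lc (e, t) ∈ S := by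
    intro e t ht hL
    rw [hLR]
    intro hR
    have hadj : PawnAdj (Rc (e,t)) (Lc (e, (⟨(t:ℕ)+1, ht⟩ : Fin m))) := by
      rw [pawnAdj_iff]
      have := e.isLt
      constructor <;> simp [Lc, Rc] <;> omega
    have hne : Rc (e,t) ≠ Lc (e, (⟨(t:ℕ)+1, ht⟩ : Fin m)) := by
      intro hq
      have := congrArg (fun p => ((p : Fin 2 × Fin (2*m)).2 : ℕ)) hq
      simp [Lc, Rc] at this
      omega
    exact hna _ hR _ hL hne hadj
  have hinitk := initseg ((univ : Finset (Fin m)).filter (fun t => Lc (0, t) ∈ S))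
    (fun t ht hmem => by
      rw [mem_filter] at hmem ⊢
      exact ⟨mem_univ _, hmono 0 t ht hmem.2⟩)
  have hinitl := initseg ((univ : Finset (Fin m)).filter (fun t => Lc (1, t) ∈ S))
    (fun t ht hmem => by
      rw [mem_filter] at hmem ⊢
      exact ⟨mem_univ _, hmono 1 t ht hmem.2⟩)
  set k := ((univ : Finset (Fin m)).filter (fun t => Lc (0, t) ∈ S)).card with hk
  set l := ((univ : Finset (Fin m)).filter (fun t => Lc (1, t) ∈ S)).card with hl
  have hLiff : ∀ (e : Fin 2) (t : Fin m),
      (Lc (e,t) ∈ S ↔ (t:ℕ) < (if (e:ℕ) = 0 then k else l)) := by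
    intro e t
    fin_cases e
    · rw [if_pos rfl]
      rw [← (hinitk.2 t)]
      simp
    · rw [if_neg (by norm_num)]
      rw [← (hinitl.2 t)]
      simp
  refine ⟨k, hinitk.1, l, hinitl.1, ?_⟩
  ext p
  obtain ⟨b, hbp⟩ : ∃ b, blk p = b := ⟨blk p, rfl⟩
  rcases mem_blk p b hbp with h | h
  · rw [h, L_mem_F]
    exact hLiff b.1 b.2
  · rw [h, R_mem_F]
    rw [show (Rc b ∈ S) ↔ ¬ Lc b ∈ S by rw [hLR b]; tauto]
    rw [hLiff b.1 b.2]

lemma F_recover_k (m k l : ℕ) (hk : k ≤ m) :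
    ((univ : Finset (Fin m)).filter (fun t => Lc (0, t) ∈ Fkl m k l)).card = k := by
  have heq : (univ : Finset (Fin m)).filter (fun t => Lc (0, t) ∈ Fkl m k l)
      = (univ : Finset (Fin m)).filter (fun (t : Fin m) => (t:ℕ) < k) := by
    ext t
    simp only [mem_filter, mem_univ, true_and, L_mem_F]
    norm_num
  rw [heq, card_filter_lt m k hk]

lemma F_recover_l (m k l : ℕ) (hl : l ≤ m) :
    ((univ : Finset (Fin m)).filter (fun t => Lc (1, t) ∈ Fkl m k l)).card = l := by
  have heq : (univ : Finset (Fin m)).filter (fun t => Lc (1, t) ∈ Fkl m k l)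
      = (univ : Finset (Fin m)).filter (fun (t : Fin m) => (t:ℕ) < l) := by
    ext t
    simp only [mem_filter, mem_univ, true_and, L_mem_F]
    norm_num
  rw [heq, card_filter_lt m l hl]

lemma pawnCount_eq (m : ℕ) : pawnCount m = (m+1)^2 := by
  have hset : ((Finset.univ : Finset (Fin 2 × Fin (2 * m))).powerset.filter
      (fun S => S.card = 2 * m ∧ Nonatt S))
      = (((range (m+1)) ×ˢ (range (m+1))).image fun kl => Fkl m kl.1 kl.2) := by
    ext S
    simp only [mem_filter, mem_powerset, mem_image, mem_product, mem_range]
    constructor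
    · rintro ⟨-, hcard, hna⟩
      obtain ⟨k, hk, l, hl, rfl⟩ := exists_F S hcard hna
      exact ⟨(k,l), ⟨by omega, by omega⟩, rfl⟩
    · rintro ⟨⟨k,l⟩, ⟨hk, hl⟩, rfl⟩
      exact ⟨subset_univ _, Fkl_card m k l, nonatt_F m k l⟩
  rw [pawnCount, hset, Finset.card_image_of_injOn, Finset.card_product,
    Finset.card_range]
  · ring
  · rintro ⟨k, l⟩ hkl ⟨k', l'⟩ hkl' heq
    simp only [Finset.coe_product, Set.mem_prod, mem_coe, mem_range] at hkl hkl'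
    have hk : k ≤ m := by omega
    have hl : l ≤ m := by omega
    have hk' : k' ≤ m := by omega
    have hl' : l' ≤ m := by omega
    simp only at heq
    have e1 : k = k' := by
      rw [← F_recover_k m k l hk, ← F_recover_k m k' l' hk', heq]
    have e2 : l = l' := by
      rw [← F_recover_l m k l hl, ← F_recover_l m k' l' hl', heq]
    simp [e1, e2]

theorem stmt18 :
    pawnCount 1 = 4 ∧
    (∀ m : ℕ, 2 ≤ m → pawnCount m = pawnCount (m - 1) + 2 * m + 1) ∧
    (∀ m : ℕ, 1 ≤ m → pawnCount m = (m + 1) ^ 2) := by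
  refine ⟨by rw [pawnCount_eq]; norm_num, fun m hm => ?_, fun m _ => pawnCount_eq m⟩
  rw [pawnCount_eq, pawnCount_eq]
  have h1 : m - 1 + 1 = m := by omega
  rw [h1]
  ring
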